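/- arXiv:2407.04672 — 2 statements merged into one kernel-verified Lean document; each statement's English description precedes it below -/
import Mathlib

section
/- Let μ be the Gibbs distribution of a spin system on a finite graph G = (V,E) and suppose G has a (ξ,k)-degree partition V = U_1 ⊎ ⋯ ⊎ U_k. Then for every 0 ≤ ℓ ≤ k−1, the relaxation time of the Glauber dynamics on μ satisfies T_rel^GD(μ) ≤ T_rel(k,ℓ) · T_rel^{(η(ℓ))}(μ), where η(ℓ) = (1+ξ)(k−ℓ)/k and T_rel(k,ℓ) is the relaxation time of the k↔ℓ down-up walk on the partition U_1, …, U_k. -/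
open Finset
open scoped BigOperators Classical

namespace Paper

/-- Configurations: assignments of one of `q` spins to each of `n` vertices. -/
abbrev Config (n q : ℕ) := Fin n → Fin q

/-- A spin system on a graph `G` on vertex set `Fin n` with spin set `Fin q`:
nonnegative external fields and nonnegative symmetric interaction matrices. -/
structure SpinSystem (n q : ℕ) (G : SimpleGraph (Fin n)) where
  b : Fin n → Fin q → ℝ
  A : Fin n → Fin n → Fin q → Fin q → ℝ
  b_nonneg : ∀ v a, 0 ≤ b v a
  A_nonneg : ∀ v w a c, 0 ≤ A v w a c
  A_symm : ∀ v w a c, A v w a c = A w v c a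

variable {n q k : ℕ}

/-- The number of neighbours of `v` (in `G`) lying inside `Λ`. -/
noncomputable def degIn (G : SimpleGraph (Fin n)) (Λ : Finset (Fin n)) (v : Fin n) : ℕ :=
  (Λ.filter fun w => G.Adj v w).card

/-- The maximum degree of `G`. -/
noncomputable def maxDeg (G : SimpleGraph (Fin n)) : ℕ :=
  univ.sup fun v => degIn G univ v

/-- The edges of `G`, listed as ordered pairs `p` with `p.1 < p.2`. -/
noncomputable def edgePairs (G : SimpleGraph (Fin n)) : Finset (Fin n × Fin n) :=
  univ.filter fun p => p.1 < p.2 ∧ G.Adj p.1 p.2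

/-- Conditional Gibbs weight: the free set is `Λ`, and the pinning uses the values
of `τ` outside of `Λ`.  Edges lying entirely outside `Λ` are dropped. -/
noncomputable def condWeight {G : SimpleGraph (Fin n)} (S : SpinSystem n q G)
    (Λ : Finset (Fin n)) (τ σ : Config n q) : ℝ :=
  (if ∀ v, v ∉ Λ → σ v = τ v then (1 : ℝ) else 0)
    * (∏ v ∈ Λ, S.b v (σ v))
    * ∏ p ∈ (edgePairs G).filter (fun p => p.1 ∈ Λ ∨ p.2 ∈ Λ),
        S.A p.1 p.2 (σ p.1) (σ p.2)

/-- The conditional Gibbs distribution `μ^τ` with free set `Λ` and pinning `τ`. -/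
noncomputable def condDist {G : SimpleGraph (Fin n)} (S : SpinSystem n q G)
    (Λ : Finset (Fin n)) (τ : Config n q) : Config n q → ℝ :=
  fun σ => condWeight S Λ τ σ / ∑ σ' : Config n q, condWeight S Λ τ σ'

/-- The Gibbs distribution of the spin system. -/
noncomputable def gibbsDist {G : SimpleGraph (Fin n)} (S : SpinSystem n q G) :
    Config n q → ℝ :=
  fun σ => condWeight S univ σ σ / ∑ σ' : Config n q, condWeight S univ σ' σ'

/-- Every conditional weight has positive total mass. -/
def PosCondMass {G : SimpleGraph (Fin n)} (S : SpinSystem n q G) : Prop :=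
  ∀ (Λ : Finset (Fin n)) (τ : Config n q), 0 < ∑ σ : Config n q, condWeight S Λ τ σ

/-- Expectation of `f` under (the finitely supported density) `μ`. -/
noncomputable def expVal (μ f : Config n q → ℝ) : ℝ := ∑ σ, μ σ * f σ

/-- Variance of `f` under `μ`. -/
noncomputable def varD (μ f : Config n q → ℝ) : ℝ :=
  expVal μ fun σ => (f σ - expVal μ f) ^ 2

/-- `μ` conditioned to agree with `σ₀` on the set `T`. -/
noncomputable def restrictDist (μ : Config n q → ℝ) (T : Finset (Fin n)) (σ₀ : Config n q) :
    Config n q → ℝ :=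
  fun σ => (if ∀ v ∈ T, σ v = σ₀ v then μ σ else 0)
    / ∑ σ' ∈ univ.filter (fun σ' : Config n q => ∀ v ∈ T, σ' v = σ₀ v), μ σ'

/-- `μ[Var_S[f]]`: the average over `σ ~ μ` of the variance of `f` under `μ`
conditioned on the coordinates outside the free set `Sfree`. -/
noncomputable def avgCondVar (μ : Config n q → ℝ) (Sfree : Finset (Fin n))
    (f : Config n q → ℝ) : ℝ :=
  ∑ σ, μ σ * varD (restrictDist μ Sfreeᶜ σ) f

/-- `C` is an upper bound on the relaxation time of the Glauber dynamics on `μ`: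
approximate tensorization of variance with constant `C`. -/
def IsRelaxBound (μ : Config n q → ℝ) (C : ℝ) : Prop :=
  0 ≤ C ∧ ∀ f : Config n q → ℝ,
    varD μ f ≤ C / (n : ℝ) * ∑ v : Fin n, avgCondVar μ {v} f

/-- `π` is a coupling of `μ` and `ν`. -/
structure IsCoupling (μ ν : Config n q → ℝ) (π : Config n q → Config n q → ℝ) : Prop where
  nonneg : ∀ x y, 0 ≤ π x y
  fst_marginal : ∀ x, ∑ y, π x y = μ x
  snd_marginal : ∀ y, ∑ x, π x y = ν y

/-- Weighted Hamming distance with weight function `ρ`. -/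
noncomputable def hamW (ρ : Fin n → ℕ) (x y : Config n q) : ℝ :=
  ∑ v ∈ univ.filter (fun v => x v ≠ y v), (ρ v : ℝ)

/-- Expected weighted Hamming distance under a coupling `π`. -/
noncomputable def expHam (π : Config n q → Config n q → ℝ) (ρ : Fin n → ℕ) : ℝ :=
  ∑ x, ∑ y, π x y * hamW ρ x y

/-- Coupling independence (with a fixed witnessing weight `ρ`) of the Gibbs
distribution of the spin system `S`, using Gibbs conditional distributions. -/
def CoupIndepWith {G : SimpleGraph (Fin n)} (S : SpinSystem n q G) (ρ : Fin n → ℕ)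
    (C : ℝ) : Prop :=
  (∀ v, 0 < ρ v) ∧
  ∀ (P : Finset (Fin n)) (v₀ : Fin n) (σ₁ σ₂ : Config n q),
    v₀ ∈ P → σ₁ v₀ ≠ σ₂ v₀ → (∀ v ∈ P, v ≠ v₀ → σ₁ v = σ₂ v) →
    ∃ π, IsCoupling (condDist S Pᶜ σ₁) (condDist S Pᶜ σ₂) π ∧
      expHam π ρ ≤ C * (ρ v₀ : ℝ)

/-- The spin system `S` is `C`-coupling independent. -/
def CoupIndep {G : SimpleGraph (Fin n)} (S : SpinSystem n q G) (C : ℝ) : Prop :=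
  ∃ ρ : Fin n → ℕ, CoupIndepWith S ρ C

/-- `C`-coupling independence for a bare distribution `μ`, using conditionals
obtained by restriction. -/
def CoupIndepDist (μ : Config n q → ℝ) (C : ℝ) : Prop :=
  ∃ ρ : Fin n → ℕ, (∀ v, 0 < ρ v) ∧
  ∀ (P : Finset (Fin n)) (v₀ : Fin n) (σ₁ σ₂ : Config n q),
    v₀ ∈ P → σ₁ v₀ ≠ σ₂ v₀ → (∀ v ∈ P, v ≠ v₀ → σ₁ v = σ₂ v) →
    ∃ π, IsCoupling (restrictDist μ P σ₁) (restrictDist μ P σ₂) π ∧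
      expHam π ρ ≤ C * (ρ v₀ : ℝ)

/-- `Λ ∈ D(η)`: the induced subgraph `G[Λ]` has maximum degree at most `η·Δ`. -/
def InDeta (G : SimpleGraph (Fin n)) (η : ℝ) (Λ : Finset (Fin n)) : Prop :=
  ∀ v ∈ Λ, (degIn G Λ v : ℝ) ≤ η * (maxDeg G : ℝ)

/-- `U` is a partition of the vertex set into `k` (possibly empty) parts. -/
def IsPartition (U : Fin k → Finset (Fin n)) : Prop :=
  (∀ i j, i ≠ j → Disjoint (U i) (U j)) ∧ ∀ v : Fin n, ∃ i, v ∈ U i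

/-- A `(ξ,k)`-degree partition of `G`. -/
def IsDegreePartition (G : SimpleGraph (Fin n)) (ξ : ℝ) (U : Fin k → Finset (Fin n)) :
    Prop :=
  IsPartition U ∧ ∀ (v : Fin n) (i : Fin k),
    (degIn G (U i) v : ℝ) ≤ (1 + ξ) * (maxDeg G : ℝ) / (k : ℝ)

/-- `U_R = ⋃_{i ∈ R} U_i`. -/
noncomputable def unionBlocks (U : Fin k → Finset (Fin n)) (R : Finset (Fin k)) :
    Finset (Fin n) :=
  R.biUnion U

/-- The Glauber update `P_v` at vertex `v` for the distribution `μ`. -/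
noncomputable def glauberUpdate (μ : Config n q → ℝ) (v : Fin n) (x y : Config n q) : ℝ :=
  if ∀ u, u ≠ v → y u = x u then
    (if 0 < ∑ σ ∈ univ.filter (fun σ : Config n q => ∀ u, u ≠ v → σ u = x u), μ σ then
      μ y / ∑ σ ∈ univ.filter (fun σ : Config n q => ∀ u, u ≠ v → σ u = x u), μ σ
    else if y = x then 1 else 0)
  else 0

/-- The transition matrix of the Glauber dynamics on `μ`. -/
noncomputable def glauberP (μ : Config n q → ℝ) : Config n q → Config n q → ℝ :=
  fun x y => (1 / (n : ℝ)) * ∑ v : Fin n, glauberUpdate μ v x y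

/-- One step of a Markov kernel applied to a distribution. -/
noncomputable def stepD (P : Config n q → Config n q → ℝ) (ν : Config n q → ℝ) :
    Config n q → ℝ :=
  fun y => ∑ x, ν x * P x y

/-- The Dirac distribution at `x₀`. -/
noncomputable def delta (x₀ : Config n q) : Config n q → ℝ :=
  fun y => if y = x₀ then 1 else 0

/-- Total variation distance. -/
noncomputable def dTV (μ ν : Config n q → ℝ) : ℝ := (1 / 2) * ∑ σ, |μ σ - ν σ|

/-- TV distance to `μ` after `t` steps of the Glauber dynamics on `μ` started at `x₀`. -/
noncomputable def glauberDist (μ : Config n q → ℝ) (x₀ : Config n q) (t : ℕ) : ℝ :=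
  dTV ((stepD (glauberP μ))^[t] (delta x₀)) μ

/-- Coordinatewise partial order on configurations induced by the per-vertex
total orders `le`. -/
def ConfLE (le : Fin n → Fin q → Fin q → Prop) (x y : Config n q) : Prop :=
  ∀ v, le v (x v) (y v)

/-- Stochastic domination with respect to the order `le`. -/
def StochDom (le : Fin n → Fin q → Fin q → Prop) (μ ν : Config n q → ℝ) : Prop :=
  ∃ π, IsCoupling μ ν π ∧ ∀ x y, π x y ≠ 0 → ConfLE le x y

/-- `μ` is a monotone spin system w.r.t. the per-vertex orders `le`. -/
def MonotoneSystem (le : Fin n → Fin q → Fin q → Prop) (μ : Config n q → ℝ) : Prop :=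
  ∀ (v : Fin n) (x y : Config n q), ConfLE le x y →
    StochDom le (glauberUpdate μ v x) (glauberUpdate μ v y)

/-- Hardcore weight: spin `1` means occupied. -/
noncomputable def hcWeight (G : SimpleGraph (Fin n)) (lam : ℝ) (σ : Config n 2) : ℝ :=
  if ∀ u v, G.Adj u v → ¬(σ u = 1 ∧ σ v = 1) then
    lam ^ (univ.filter fun v => σ v = 1).card
  else 0

/-- The hardcore distribution on `G` with fugacity `lam`. -/
noncomputable def hardcoreDist (G : SimpleGraph (Fin n)) (lam : ℝ) : Config n 2 → ℝ :=
  fun σ => hcWeight G lam σ / ∑ σ' : Config n 2, hcWeight G lam σ'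

/-- The tree uniqueness threshold `λ_c(Δ)`. -/
noncomputable def lambdaC (Δ : ℕ) : ℝ := ((Δ : ℝ) - 1) ^ (Δ - 1) / ((Δ : ℝ) - 2) ^ Δ

/-- `G` is bipartite with parts `VL` and `VLᶜ`. -/
def Bipartite (G : SimpleGraph (Fin n)) (VL : Finset (Fin n)) : Prop :=
  ∀ u v, G.Adj u v → (u ∈ VL ↔ v ∉ VL)

/-- Maximum degree of `G` among the vertices of `W`. -/
noncomputable def maxDegOn (G : SimpleGraph (Fin n)) (W : Finset (Fin n)) : ℕ :=
  W.sup fun v => degIn G univ v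

/-- The marginal of `μ` on `W`, realized as a distribution on full configurations
that vanish (take spin `0`) outside of `W`. -/
noncomputable def marginalOn (μ : Config n 2 → ℝ) (W : Finset (Fin n)) :
    Config n 2 → ℝ :=
  fun σ => if ∀ v, v ∉ W → σ v = 0 then
      ∑ σ' ∈ univ.filter (fun σ' : Config n 2 => ∀ v ∈ W, σ' v = σ v), μ σ'
    else 0

/-- Proper list colorings of `G` with lists `L`. -/
noncomputable def properColorings (G : SimpleGraph (Fin n)) (L : Fin n → Finset (Fin q)) :
    Finset (Config n q) :=
  univ.filter fun σ => (∀ v, σ v ∈ L v) ∧ ∀ u v, G.Adj u v → σ u ≠ σ v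

/-- Uniform distribution over a finite set of configurations. -/
noncomputable def uniformOn (Ω : Finset (Config n q)) : Config n q → ℝ :=
  fun σ => if σ ∈ Ω then (1 : ℝ) / (Ω.card : ℝ) else 0

/-- The subgraph of `G` induced on `W` (kept on the same vertex type). -/
def restrictG (G : SimpleGraph (Fin n)) (W : Finset (Fin n)) : SimpleGraph (Fin n) where
  Adj u v := G.Adj u v ∧ u ∈ W ∧ v ∈ W
  symm := ⟨fun u v h => ⟨G.adj_symm h.1, h.2.2, h.2.1⟩⟩
  loopless := ⟨fun v h => G.irrefl h.1⟩

/-- The vertex set of the connected component of `v` in `G[W]` (empty if `v ∉ W`). -/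
noncomputable def compIn (G : SimpleGraph (Fin n)) (W : Finset (Fin n)) (v : Fin n) :
    Finset (Fin n) :=
  if v ∈ W then univ.filter (fun w => w ∈ W ∧ (restrictG G W).Reachable v w) else ∅



section AuxProof

variable {G : SimpleGraph (Fin n)}

lemma varD_nonneg {μ : Config n q → ℝ} (h : ∀ x, 0 ≤ μ x) (f : Config n q → ℝ) :
    0 ≤ varD μ f := by
  unfold varD expVal
  exact Finset.sum_nonneg fun x _ => mul_nonneg (h x) (sq_nonneg _)

lemma restrictDist_nonneg {μ : Config n q → ℝ} (h : ∀ x, 0 ≤ μ x)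
    (T : Finset (Fin n)) (σ₀ : Config n q) (x : Config n q) :
    0 ≤ restrictDist μ T σ₀ x := by
  unfold restrictDist
  apply div_nonneg
  · split <;> simp [h _]
  · exact Finset.sum_nonneg fun y _ => h y

lemma avgCondVar_nonneg {μ : Config n q → ℝ} (h : ∀ x, 0 ≤ μ x)
    (Sfree : Finset (Fin n)) (f : Config n q → ℝ) :
    0 ≤ avgCondVar μ Sfree f := by
  unfold avgCondVar
  exact Finset.sum_nonneg fun σ _ =>
    mul_nonneg (h σ) (varD_nonneg (restrictDist_nonneg h _ _) f)

lemma varD_support_single {d : Config n q → ℝ} {x₀ : Config n q}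
    (h1 : ∀ x, x ≠ x₀ → d x = 0) (h2 : d x₀ = 0 ∨ d x₀ = 1) (f : Config n q → ℝ) :
    varD d f = 0 := by
  have he : ∀ g : Config n q → ℝ, expVal d g = d x₀ * g x₀ := by
    intro g
    unfold expVal
    rw [Finset.sum_eq_single x₀]
    · intro x _ hx; rw [h1 x hx, zero_mul]
    · intro h; exact absurd (Finset.mem_univ _) h
  unfold varD
  rw [he]
  rw [he]
  rcases h2 with h | h <;> rw [h] <;> ring

lemma restrict_restrict {μ : Config n q → ℝ} {T T' : Finset (Fin n)} (hTT : T ⊆ T')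
    {σ₀ τ : Config n q} (hτ : restrictDist μ T σ₀ τ ≠ 0) :
    restrictDist (restrictDist μ T σ₀) T' τ = restrictDist μ T' τ := by
  unfold restrictDist at *
  set Z : ℝ := ∑ σ' ∈ univ.filter (fun σ' : Config n q => ∀ v ∈ T, σ' v = σ₀ v), μ σ' with hZdef
  have hZ : Z ≠ 0 := by
    intro h; apply hτ; rw [h, div_zero]
  have hPτ : ∀ v ∈ T, τ v = σ₀ v := by
    by_contra hc
    apply hτ; rw [if_neg hc, zero_div]
  have key : ∀ σ : Config n q, (∀ v ∈ T', σ v = τ v) → ∀ v ∈ T, σ v = σ₀ v := by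
    intro σ hσ v hv
    rw [hσ v (hTT hv), hPτ v hv]
  funext σ
  have hnum : (if ∀ v ∈ T', σ v = τ v then
      (if ∀ v ∈ T, σ v = σ₀ v then μ σ else 0) / Z else 0)
      = (if ∀ v ∈ T', σ v = τ v then μ σ else 0) / Z := by
    by_cases h : ∀ v ∈ T', σ v = τ v
    · rw [if_pos h, if_pos h, if_pos (key σ h)]
    · rw [if_neg h, if_neg h, zero_div]
  rw [hnum]
  have hden : ∑ σ' ∈ univ.filter (fun σ' : Config n q => ∀ v ∈ T', σ' v = τ v),
      (if ∀ v ∈ T, σ' v = σ₀ v then μ σ' else 0) / Z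
      = (∑ σ' ∈ univ.filter (fun σ' : Config n q => ∀ v ∈ T', σ' v = τ v), μ σ') / Z := by
    rw [Finset.sum_div]
    apply Finset.sum_congr rfl
    intro σ' hσ'
    rw [Finset.mem_filter] at hσ'
    rw [if_pos (key σ' hσ'.2)]
  rw [hden, div_div_div_cancel_right₀ hZ]

lemma tower_mass {μ : Config n q → ℝ} (hμ : ∀ x, 0 ≤ μ x) (T : Finset (Fin n))
    (τ : Config n q) : ∑ σ, μ σ * restrictDist μ T σ τ = μ τ := by
  unfold restrictDist
  set Zτ : ℝ := ∑ σ' ∈ univ.filter (fun σ' : Config n q => ∀ v ∈ T, σ' v = τ v), μ σ'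
    with hZτ
  have hterm : ∀ σ : Config n q,
      μ σ * ((if ∀ v ∈ T, τ v = σ v then μ τ else 0) /
        ∑ σ' ∈ univ.filter (fun σ' : Config n q => ∀ v ∈ T, σ' v = σ v), μ σ')
      = if ∀ v ∈ T, τ v = σ v then μ σ * (μ τ / Zτ) else 0 := by
    intro σ
    by_cases h : ∀ v ∈ T, τ v = σ v
    · rw [if_pos h, if_pos h]
      congr 2
      apply Finset.sum_congr _ (fun _ _ => rfl)
      apply Finset.filter_congr
      intro σ' _
      constructor
      · intro hh v hv; rw [hh v hv, ← h v hv]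
      · intro hh v hv; rw [hh v hv, h v hv]
    · rw [if_neg h, if_neg h, zero_div, mul_zero]
  simp_rw [hterm]
  rw [Finset.sum_ite, Finset.sum_const_zero, add_zero, ← Finset.sum_mul]
  have hset : ∑ σ ∈ univ.filter (fun σ : Config n q => ∀ v ∈ T, τ v = σ v), μ σ = Zτ := by
    rw [hZτ]
    apply Finset.sum_congr _ (fun _ _ => rfl)
    apply Finset.filter_congr
    intro σ' _
    constructor
    · intro hh v hv; rw [hh v hv]
    · intro hh v hv; rw [hh v hv]
  rw [hset]
  rcases eq_or_ne Zτ 0 with h0 | h0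
  · have hμτ : μ τ = 0 := by
      have := (Finset.sum_eq_zero_iff_of_nonneg (fun x _ => hμ x)).1 (hZτ ▸ h0) τ
      apply this
      simp
    rw [hμτ, h0]; ring
  · rw [mul_comm, div_mul_cancel₀ _ h0]

lemma avgCondVar_pinned {μ : Config n q → ℝ} {T : Finset (Fin n)} {v : Fin n}
    (hv : v ∈ T) (σ : Config n q) (f : Config n q → ℝ) :
    avgCondVar (restrictDist μ T σ) {v} f = 0 := by
  unfold avgCondVar
  apply Finset.sum_eq_zero
  intro τ _
  set ν : Config n q → ℝ := restrictDist μ T σ with hν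
  rcases eq_or_ne (ν τ) 0 with h0 | h0
  · rw [h0, zero_mul]
  have hτT : ∀ u ∈ T, τ u = σ u := by
    by_contra hc
    apply h0
    rw [hν]; unfold restrictDist
    rw [if_neg hc, zero_div]
  set x₀ : Config n q := fun u => if u = v then σ v else τ u with hx₀
  have hx₀cond : ∀ u ∈ ({v} : Finset (Fin n))ᶜ, x₀ u = τ u := by
    intro u hu
    rw [Finset.mem_compl, Finset.mem_singleton] at hu
    rw [hx₀]; simp [hu]
  have hsupp : ∀ x : Config n q, (∀ u ∈ ({v} : Finset (Fin n))ᶜ, x u = τ u) →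
      ν x ≠ 0 → x = x₀ := by
    intro x hx hnx
    have hxT : ∀ u ∈ T, x u = σ u := by
      by_contra hc
      apply hnx
      rw [hν]; unfold restrictDist
      rw [if_neg hc, zero_div]
    funext u
    rw [hx₀]
    by_cases hu : u = v
    · subst hu; simp [hxT u hv]
    · simp only [if_neg hu]
      exact hx u (by simp [Finset.mem_compl, Finset.mem_singleton, hu])
  suffices h : varD (restrictDist ν ({v} : Finset (Fin n))ᶜ τ) f = 0 by
    rw [h, mul_zero]
  have hZ : (∑ σ' ∈ univ.filter
      (fun σ' : Config n q => ∀ u ∈ ({v} : Finset (Fin n))ᶜ, σ' u = τ u), ν σ') = ν x₀ := by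
    rw [Finset.sum_filter, Finset.sum_eq_single x₀]
    · rw [if_pos hx₀cond]
    · intro x _ hx
      by_cases hc : ∀ u ∈ ({v} : Finset (Fin n))ᶜ, x u = τ u
      · rw [if_pos hc]
        by_contra hnx
        exact hx (hsupp x hc hnx)
      · rw [if_neg hc]
    · intro h; exact absurd (Finset.mem_univ _) h
  have hd : ∀ x : Config n q, restrictDist ν ({v} : Finset (Fin n))ᶜ τ x
      = (if ∀ u ∈ ({v} : Finset (Fin n))ᶜ, x u = τ u then ν x else 0) / ν x₀ := by
    intro x
    unfold restrictDist
    rw [hZ]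
  apply varD_support_single (x₀ := x₀)
  · intro x hx
    rw [hd]
    by_cases hc : ∀ u ∈ ({v} : Finset (Fin n))ᶜ, x u = τ u
    · rw [if_pos hc]
      rcases eq_or_ne (ν x) 0 with h | h
      · rw [h, zero_div]
      · exact absurd (hsupp x hc h) hx
    · rw [if_neg hc, zero_div]
  · rw [hd, if_pos hx₀cond]
    rcases eq_or_ne (ν x₀) 0 with h | h
    · left; rw [h, div_zero]
    · right; exact div_self h

lemma tower_single {μ : Config n q → ℝ} (hμ : ∀ x, 0 ≤ μ x) {T : Finset (Fin n)}
    {v : Fin n} (hv : v ∉ T) (f : Config n q → ℝ) :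
    ∑ σ, μ σ * avgCondVar (restrictDist μ T σ) {v} f = avgCondVar μ {v} f := by
  have hTT : T ⊆ ({v} : Finset (Fin n))ᶜ := by
    intro u hu
    rw [Finset.mem_compl, Finset.mem_singleton]
    rintro rfl; exact hv hu
  have hin : ∀ σ : Config n q, avgCondVar (restrictDist μ T σ) {v} f
      = ∑ τ, restrictDist μ T σ τ * varD (restrictDist μ ({v} : Finset (Fin n))ᶜ τ) f := by
    intro σ
    unfold avgCondVar
    apply Finset.sum_congr rfl
    intro τ _
    rcases eq_or_ne (restrictDist μ T σ τ) 0 with h0 | h0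
    · rw [h0, zero_mul, zero_mul]
    · rw [restrict_restrict hTT h0]
  simp_rw [hin, Finset.mul_sum, ← mul_assoc]
  rw [Finset.sum_comm]
  unfold avgCondVar
  apply Finset.sum_congr rfl
  intro τ _
  rw [← Finset.sum_mul, tower_mass hμ]

lemma condWeight_nonneg (S : SpinSystem n q G) (Λ : Finset (Fin n)) (τ σ : Config n q) :
    0 ≤ condWeight S Λ τ σ := by
  unfold condWeight
  apply mul_nonneg (mul_nonneg _ _)
  · exact Finset.prod_nonneg fun p _ => S.A_nonneg _ _ _ _
  · split <;> norm_num
  · exact Finset.prod_nonneg fun v _ => S.b_nonneg _ _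

lemma gibbsDist_nonneg (S : SpinSystem n q G) (σ : Config n q) :
    0 ≤ gibbsDist S σ := by
  unfold gibbsDist
  apply div_nonneg (condWeight_nonneg S _ _ _)
  exact Finset.sum_nonneg fun σ' _ => condWeight_nonneg S _ _ _

lemma condWeight_univ (S : SpinSystem n q G) (τ σ : Config n q) :
    condWeight S univ τ σ = (∏ v, S.b v (σ v)) *
      ∏ p ∈ edgePairs G, S.A p.1 p.2 (σ p.1) (σ p.2) := by
  unfold condWeight
  rw [if_pos (fun v hv => absurd (Finset.mem_univ v) hv), one_mul,
    Finset.filter_true_of_mem (fun p _ => Or.inl (Finset.mem_univ _))]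

/-- The constant factor coming from the pinned part. -/
noncomputable def pinC (S : SpinSystem n q G) (T : Finset (Fin n)) (σ₀ : Config n q) : ℝ :=
  (∏ v ∈ T, S.b v (σ₀ v)) *
    ∏ p ∈ (edgePairs G).filter (fun p => ¬(p.1 ∈ Tᶜ ∨ p.2 ∈ Tᶜ)),
      S.A p.1 p.2 (σ₀ p.1) (σ₀ p.2)

lemma condWeight_factor (S : SpinSystem n q G) (T : Finset (Fin n)) (σ₀ σ : Config n q)
    (hσ : ∀ v ∈ T, σ v = σ₀ v) :
    condWeight S univ σ σ = condWeight S Tᶜ σ₀ σ * pinC S T σ₀ := by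
  rw [condWeight_univ]
  unfold condWeight pinC
  have hind : (∀ v, v ∉ Tᶜ → σ v = σ₀ v) := by
    intro v hv
    rw [Finset.mem_compl, not_not] at hv
    exact hσ v hv
  rw [if_pos hind, one_mul]
  have hb : (∏ v, S.b v (σ v)) = (∏ v ∈ Tᶜ, S.b v (σ v)) * ∏ v ∈ T, S.b v (σ₀ v) := by
    rw [← Finset.prod_mul_prod_compl Tᶜ (fun v => S.b v (σ v)), compl_compl]
    congr 1
    exact Finset.prod_congr rfl (fun v hv => by rw [hσ v hv])
  have hA : (∏ p ∈ edgePairs G, S.A p.1 p.2 (σ p.1) (σ p.2))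
      = (∏ p ∈ (edgePairs G).filter (fun p => p.1 ∈ Tᶜ ∨ p.2 ∈ Tᶜ),
          S.A p.1 p.2 (σ p.1) (σ p.2))
        * ∏ p ∈ (edgePairs G).filter (fun p => ¬(p.1 ∈ Tᶜ ∨ p.2 ∈ Tᶜ)),
          S.A p.1 p.2 (σ₀ p.1) (σ₀ p.2) := by
    rw [← Finset.prod_filter_mul_prod_filter_not (edgePairs G)
      (fun p => p.1 ∈ Tᶜ ∨ p.2 ∈ Tᶜ)]
    congr 1
    apply Finset.prod_congr rfl
    intro p hp
    rw [Finset.mem_filter] at hp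
    push_neg at hp
    obtain ⟨-, h1, h2⟩ := hp
    rw [Finset.mem_compl, not_not] at h1 h2
    rw [hσ _ h1, hσ _ h2]
  rw [hb, hA]; ring

lemma condWeight_univ_indep (S : SpinSystem n q G) (τ τ' σ : Config n q) :
    condWeight S univ τ σ = condWeight S univ τ' σ := by
  rw [condWeight_univ, condWeight_univ]

lemma restrict_gibbs (S : SpinSystem n q G) (hpos : PosCondMass S)
    (T : Finset (Fin n)) (σ₀ : Config n q)
    (h0 : condWeight S univ σ₀ σ₀ ≠ 0) :
    restrictDist (gibbsDist S) T σ₀ = condDist S Tᶜ σ₀ := by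
  have hc : pinC S T σ₀ ≠ 0 := by
    intro hc
    apply h0
    rw [condWeight_factor S T σ₀ σ₀ (fun _ _ => rfl), hc, mul_zero]
  have hZ : (∑ σ' : Config n q, condWeight S univ σ' σ') ≠ 0 := by
    have := hpos univ σ₀
    rw [Finset.sum_congr rfl (fun σ' _ => condWeight_univ_indep S σ₀ σ' σ')] at this
    exact ne_of_gt this
  funext σ
  unfold restrictDist gibbsDist condDist
  set Z : ℝ := ∑ σ' : Config n q, condWeight S univ σ' σ' with hZdef
  have hnum : (if ∀ v ∈ T, σ v = σ₀ v then condWeight S univ σ σ / Z else 0)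
      = (if ∀ v ∈ T, σ v = σ₀ v then condWeight S univ σ σ else 0) / Z := by
    split <;> simp
  rw [hnum, ← Finset.sum_div, div_div_div_cancel_right₀ hZ]
  have hfac : ∀ σ' : Config n q,
      (if ∀ v ∈ T, σ' v = σ₀ v then condWeight S univ σ' σ' else 0)
      = condWeight S Tᶜ σ₀ σ' * pinC S T σ₀ := by
    intro σ'
    by_cases h : ∀ v ∈ T, σ' v = σ₀ v
    · rw [if_pos h, condWeight_factor S T σ₀ σ' h]
    · rw [if_neg h]
      unfold condWeight
      rw [if_neg, zero_mul, zero_mul, zero_mul]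
      intro hcon
      apply h
      intro v hv
      exact hcon v (by rw [Finset.mem_compl]; exact not_not_intro hv)
  rw [hfac σ]
  have hden : ∑ σ' ∈ univ.filter (fun σ' : Config n q => ∀ v ∈ T, σ' v = σ₀ v),
      condWeight S univ σ' σ'
      = (∑ σ' : Config n q, condWeight S Tᶜ σ₀ σ') * pinC S T σ₀ := by
    rw [Finset.sum_filter]
    simp_rw [hfac]
    rw [Finset.sum_mul]
  rw [hden, mul_div_mul_right _ _ hc]

lemma degree_bound {k : ℕ} {ξ : ℝ} (hξ : 0 < ξ) (U : Fin k → Finset (Fin n))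
    (hU : IsDegreePartition G ξ U) {ℓ : ℕ} (hℓ : ℓ < k)
    (R : Finset (Fin k)) (hR : R.card = ℓ) :
    InDeta G ((1 + ξ) * ((k : ℝ) - (ℓ : ℝ)) / (k : ℝ)) (unionBlocks U R)ᶜ := by
  intro v _
  have hsub : (unionBlocks U R)ᶜ ⊆ Rᶜ.biUnion U := by
    intro w hw
    rw [Finset.mem_compl] at hw
    obtain ⟨i, hi⟩ := hU.1.2 w
    rw [Finset.mem_biUnion]
    refine ⟨i, ?_, hi⟩
    rw [Finset.mem_compl]
    intro hiR
    exact hw (Finset.mem_biUnion.2 ⟨i, hiR, hi⟩)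
  have h1 : degIn G (unionBlocks U R)ᶜ v ≤ degIn G (Rᶜ.biUnion U) v := by
    unfold degIn
    exact Finset.card_le_card (Finset.filter_subset_filter _ hsub)
  have h2 : degIn G (Rᶜ.biUnion U) v ≤ ∑ i ∈ Rᶜ, degIn G (U i) v := by
    unfold degIn
    calc ((Rᶜ.biUnion U).filter (fun w => G.Adj v w)).card
        ≤ (Rᶜ.biUnion (fun i => (U i).filter (fun w => G.Adj v w))).card := by
          apply Finset.card_le_card
          intro w hw
          simp only [Finset.mem_filter, Finset.mem_biUnion] at *
          obtain ⟨⟨i, hi, hwi⟩, hadj⟩ := hw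
          exact ⟨i, hi, hwi, hadj⟩
      _ ≤ ∑ i ∈ Rᶜ, ((U i).filter (fun w => G.Adj v w)).card := Finset.card_biUnion_le
  have h3 : (∑ i ∈ Rᶜ, (degIn G (U i) v : ℝ))
      ≤ (Rᶜ.card : ℝ) * ((1 + ξ) * (maxDeg G : ℝ) / (k : ℝ)) := by
    calc (∑ i ∈ Rᶜ, (degIn G (U i) v : ℝ))
        ≤ ∑ _i ∈ Rᶜ, ((1 + ξ) * (maxDeg G : ℝ) / (k : ℝ)) :=
          Finset.sum_le_sum (fun i _ => hU.2 v i)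
      _ = (Rᶜ.card : ℝ) * ((1 + ξ) * (maxDeg G : ℝ) / (k : ℝ)) := by
          rw [Finset.sum_const, nsmul_eq_mul]
  have hcard : Rᶜ.card = k - ℓ := by
    rw [Finset.card_compl, hR, Fintype.card_fin]
  calc (degIn G (unionBlocks U R)ᶜ v : ℝ)
      ≤ (∑ i ∈ Rᶜ, degIn G (U i) v : ℕ) := by exact_mod_cast le_trans h1 h2
    _ = ∑ i ∈ Rᶜ, (degIn G (U i) v : ℝ) := by push_cast; rfl
    _ ≤ (Rᶜ.card : ℝ) * ((1 + ξ) * (maxDeg G : ℝ) / (k : ℝ)) := h3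
    _ = (1 + ξ) * ((k : ℝ) - (ℓ : ℝ)) / (k : ℝ) * (maxDeg G : ℝ) := by
        rw [hcard, Nat.cast_sub hℓ.le]
        ring

end AuxProof

/-- Lemma 2.6: comparing Glauber dynamics to the block
dynamics.  If `G` has a `(ξ,k)`-degree partition, then for every
`0 ≤ ℓ ≤ k−1`, `T_rel^GD(μ) ≤ T_rel(k,ℓ) · T_rel^{(η(ℓ))}(μ)` where
`η(ℓ) = (1+ξ)(k−ℓ)/k`; expressed via relaxation bounds: whenever `T₁` is a
relaxation bound for the `k ↔ ℓ` down-up walk and `T₂` is a common relaxation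
bound for all conditional distributions with free set in `D(η(ℓ))`, the
product `T₁·T₂` is a relaxation bound for `μ`. -/
theorem statement3 {n q : ℕ} (G : SimpleGraph (Fin n)) (S : SpinSystem n q G)
    (hq : 2 ≤ q) (hpos : PosCondMass S)
    (k : ℕ) (ξ : ℝ) (hξ : 0 < ξ)
    (U : Fin k → Finset (Fin n)) (hU : IsDegreePartition G ξ U)
    (ℓ : ℕ) (hℓ : ℓ < k) :
    ∀ T₁ T₂ : ℝ, 0 ≤ T₁ → 0 ≤ T₂ →
      (∀ f : Config n q → ℝ,
        varD (gibbsDist S) f ≤ T₁ / (k.choose ℓ : ℝ) *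
          ∑ R ∈ (univ : Finset (Fin k)).powersetCard ℓ,
            avgCondVar (gibbsDist S) (unionBlocks U R)ᶜ f) →
      (∀ (Λ : Finset (Fin n)) (τ : Config n q),
        InDeta G ((1 + ξ) * ((k : ℝ) - (ℓ : ℝ)) / (k : ℝ)) Λ →
        IsRelaxBound (condDist S Λ τ) T₂) →
      IsRelaxBound (gibbsDist S) (T₁ * T₂) := by
  intro T₁ T₂ hT₁ hT₂ hyp1 hyp2
  have hμ : ∀ x, 0 ≤ gibbsDist S x := gibbsDist_nonneg S
  set μ : Config n q → ℝ := gibbsDist S with hμdef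
  refine ⟨mul_nonneg hT₁ hT₂, ?_⟩
  intro f
  have hC : (0:ℝ) < (k.choose ℓ : ℝ) := by
    exact_mod_cast Nat.choose_pos hℓ.le
  set B : ℝ := T₂ / (n:ℝ) * ∑ v : Fin n, avgCondVar μ {v} f with hB
  have keyR : ∀ R ∈ (univ : Finset (Fin k)).powersetCard ℓ,
      avgCondVar μ (unionBlocks U R)ᶜ f ≤ B := by
    intro R hR
    rw [Finset.mem_powersetCard] at hR
    have hdeg : InDeta G ((1 + ξ) * ((k : ℝ) - (ℓ : ℝ)) / (k : ℝ)) (unionBlocks U R)ᶜ :=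
      degree_bound hξ U hU hℓ R hR.2
    set T : Finset (Fin n) := unionBlocks U R with hT
    have hstep1 : avgCondVar μ Tᶜ f ≤ ∑ σ, μ σ * (T₂/(n:ℝ) *
        ∑ v : Fin n, avgCondVar (restrictDist μ T σ) {v} f) := by
      unfold avgCondVar
      rw [compl_compl]
      apply Finset.sum_le_sum
      intro σ _
      rcases eq_or_ne (μ σ) 0 with h0 | h0
      · rw [h0, zero_mul, zero_mul]
      · have hW : condWeight S univ σ σ ≠ 0 := by
          intro hw
          apply h0
          rw [hμdef]
          unfold gibbsDist
          rw [hw, zero_div]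
        apply mul_le_mul_of_nonneg_left _ (hμ σ)
        rw [hμdef, restrict_gibbs S hpos T σ hW]
        exact (hyp2 Tᶜ σ hdeg).2 f
    have hswap : (∑ σ, μ σ * (T₂/(n:ℝ) *
        ∑ v : Fin n, avgCondVar (restrictDist μ T σ) {v} f))
        = T₂/(n:ℝ) * ∑ v : Fin n, ∑ σ,
            μ σ * avgCondVar (restrictDist μ T σ) {v} f := by
      simp_rw [Finset.mul_sum, ← mul_assoc, mul_comm _ (T₂/(n:ℝ)), mul_assoc]
      rw [Finset.sum_comm]
    have hv : ∀ v : Fin n, (∑ σ, μ σ * avgCondVar (restrictDist μ T σ) {v} f)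
        ≤ avgCondVar μ {v} f := by
      intro v
      by_cases hvT : v ∈ T
      · calc (∑ σ, μ σ * avgCondVar (restrictDist μ T σ) {v} f) = 0 :=
            Finset.sum_eq_zero fun σ _ => by rw [avgCondVar_pinned hvT, mul_zero]
          _ ≤ avgCondVar μ {v} f := avgCondVar_nonneg hμ _ f
      · exact le_of_eq (tower_single hμ hvT f)
    calc avgCondVar μ Tᶜ f
        ≤ ∑ σ, μ σ * (T₂/(n:ℝ) *
            ∑ v : Fin n, avgCondVar (restrictDist μ T σ) {v} f) := hstep1
      _ = T₂/(n:ℝ) * ∑ v : Fin n, ∑ σ,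
            μ σ * avgCondVar (restrictDist μ T σ) {v} f := hswap
      _ ≤ T₂/(n:ℝ) * ∑ v : Fin n, avgCondVar μ {v} f := by
          apply mul_le_mul_of_nonneg_left _ (div_nonneg hT₂ (Nat.cast_nonneg n))
          exact Finset.sum_le_sum (fun v _ => hv v)
      _ = B := hB.symm
  calc varD μ f
      ≤ T₁ / (k.choose ℓ : ℝ) *
          ∑ R ∈ (univ : Finset (Fin k)).powersetCard ℓ,
            avgCondVar μ (unionBlocks U R)ᶜ f := hyp1 f
    _ ≤ T₁ / (k.choose ℓ : ℝ) * ((k.choose ℓ : ℝ) * B) := by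
        apply mul_le_mul_of_nonneg_left _ (div_nonneg hT₁ hC.le)
        calc (∑ R ∈ (univ : Finset (Fin k)).powersetCard ℓ,
              avgCondVar μ (unionBlocks U R)ᶜ f)
            ≤ ∑ _R ∈ (univ : Finset (Fin k)).powersetCard ℓ, B :=
              Finset.sum_le_sum keyR
          _ = (k.choose ℓ : ℝ) * B := by
              rw [Finset.sum_const, nsmul_eq_mul, Finset.card_powersetCard,
                Finset.card_univ, Fintype.card_fin]
    _ = T₁ * T₂ / (n:ℝ) * ∑ v : Fin n, avgCondVar μ {v} f := by
        rw [← mul_assoc, div_mul_cancel₀ _ hC.ne', hB]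
        ring

end Paper
end

section
/- Let θ > 1 and let k ≥ ⌈2θ⌉ be an integer. Let G = (V_L ⊎ V_R, E) be a bipartite graph with maximum left degree Δ_L ≥ 1 and maximum right degree Δ_R ≤ θ·Δ_L. If e·θ²·Δ_L²·k·exp(−Δ_L/(2θ)) < 1, then there exists a partition V_L = U_1 ⊎ ⋯ ⊎ U_k such that |Γ(v) ∩ U_i| ≤ Δ_L for every v ∈ V_R and every i ∈ [k]. In particular, such a partition exists whenever Δ_L = Ω(θ·log(kθ)). -/
open Finset
open scoped BigOperators Classical

namespace Paper

variable {n q k : ℕ}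

section LLLAux

lemma pade (u : ℝ) (hu : 0 ≤ u) : Real.log (1+u) ≤ u*(6+u)/(6+4*u) := by
  set f : ℝ → ℝ := fun u => u*(6+u)/(6+4*u) - Real.log (1+u) with hf
  have hder : ∀ u : ℝ, 0 ≤ u → HasDerivAt f (4*u^3/((6+4*u)^2*(1+u))) u := by
    intro u hu
    have h1 : (0:ℝ) < 1 + u := by linarith
    have h2 : (0:ℝ) < 6 + 4*u := by linarith
    have hnum : HasDerivAt (fun u : ℝ => u*(6+u)) (1*(6+u) + u*(0+1)) u :=
      (hasDerivAt_id u).mul ((hasDerivAt_const u 6).add (hasDerivAt_id u))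
    have hden : HasDerivAt (fun u : ℝ => 6+4*u) (0 + 4*1) u :=
      (hasDerivAt_const u 6).add ((hasDerivAt_id u).const_mul 4)
    have hdiv := hnum.div hden h2.ne'
    have hlog : HasDerivAt (fun u : ℝ => Real.log (1+u)) ((0+1)/(1+u)) u :=
      ((hasDerivAt_const u 1).add (hasDerivAt_id u)).log h1.ne'
    have := hdiv.sub hlog
    refine HasDerivAt.congr_deriv this ?_
    field_simp
    ring
  have hmono : MonotoneOn f (Set.Ici 0) := by
    apply monotoneOn_of_deriv_nonneg (convex_Ici 0)
    · intro u hu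
      exact (hder u hu).continuousAt.continuousWithinAt
    · intro u hu
      rw [interior_Ici] at hu
      exact (hder u (le_of_lt hu)).differentiableAt.differentiableWithinAt
    · intro u hu
      rw [interior_Ici] at hu
      rw [(hder u hu.le).deriv]
      have h3 : 0 ≤ u^3 := pow_nonneg hu.le 3
      apply div_nonneg (by linarith)
      have := sq_nonneg (6+4*u)
      nlinarith
  have h0 : f 0 = 0 := by simp [hf]
  have := hmono (Set.mem_Ici.2 le_rfl) (Set.mem_Ici.2 hu) hu
  rw [h0] at this
  simp only [hf] at this
  linarith

lemma core (θ : ℝ) (hθ : 1 < θ) :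
    1/(2*θ) + θ * Real.log ((2*θ-1)/(2*θ-2)) ≤ Real.log ((2*θ-1)/(θ-1)) := by
  obtain ⟨s, hs0, rfl⟩ : ∃ s : ℝ, 0 < s ∧ θ = s + 1 := ⟨θ-1, by linarith, by ring⟩
  have hsplit : Real.log ((2*(s+1)-1)/((s+1)-1)) =
      Real.log 2 + Real.log ((2*(s+1)-1)/(2*(s+1)-2)) := by
    rw [← Real.log_mul (by norm_num) (div_pos (by linarith) (by linarith)).ne']
    congr 1
    rw [show (2*(s+1)-2) = 2*s by ring, show ((s+1)-1) = s by ring, ← mul_div_assoc,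
      mul_div_mul_left _ _ (two_ne_zero)]
  rw [hsplit]
  have hρ : (2*(s+1)-1)/(2*(s+1)-2) = 1 + 1/(2*s) := by
    have h2s : (2:ℝ)*s ≠ 0 := by positivity
    rw [show (2*(s+1)-2) = 2*s by ring]
    rw [div_eq_iff h2s]
    field_simp
    ring
  rw [hρ]
  have hp := pade (1/(2*s)) (by positivity)
  have hlog2 := Real.log_two_gt_d9
  have hval : (1/(2*s))*(6+1/(2*s))/(6+4*(1/(2*s))) = (12*s+1)/(4*s*(6*s+2)) := by
    field_simp
    ring
  rw [hval] at hp
  have hps : s * Real.log (1+1/(2*s)) ≤ (12*s+1)/(4*(6*s+2)) := by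
    have h := mul_le_mul_of_nonneg_left hp hs0.le
    calc s * Real.log (1+1/(2*s)) ≤ s * ((12*s+1)/(4*s*(6*s+2))) := h
      _ = (12*s+1)/(4*(6*s+2)) := by field_simp
  have final : 1/(2*(s+1)) + (12*s+1)/(4*(6*s+2)) ≤ Real.log 2 := by
    rw [div_add_div _ _ (by positivity) (by positivity), div_le_iff₀ (by positivity)]
    have hkey : (0:ℝ) ≤ (Real.log 2 - 0.6931471803) * (48*s^2+64*s+16) := by
      apply mul_nonneg (by linarith) (by positivity)
    nlinarith [sq_nonneg (10000*s - 3041), hs0]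
  calc 1/(2*(s+1)) + (s+1) * Real.log (1+1/(2*s))
      = 1/(2*(s+1)) + s * Real.log (1+1/(2*s)) + Real.log (1+1/(2*s)) := by ring
    _ ≤ Real.log 2 + Real.log (1+1/(2*s)) := by linarith


lemma xd (d : ℕ) (hd : 1 ≤ d) :
    (Real.exp 1 * ((d:ℝ)+1))⁻¹ ≤ (1/((d:ℝ)+1)) * (1 - 1/((d:ℝ)+1))^d := by
  have hd0 : (0:ℝ) < d := by exact_mod_cast hd
  have h1 : (1:ℝ) - 1/((d:ℝ)+1) = (d:ℝ)/((d:ℝ)+1) := by field_simp; ring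
  rw [h1]
  have h2 : ((d:ℝ)/((d:ℝ)+1)) = ((1 + 1/(d:ℝ))⁻¹) := by
    rw [inv_eq_one_div]
    rw [div_eq_div_iff (by positivity) (by positivity)]
    field_simp
  have h3 : (1 + 1/(d:ℝ))^d ≤ Real.exp 1 := by
    calc (1 + 1/(d:ℝ))^d ≤ (Real.exp (1/(d:ℝ)))^d := by
          apply pow_le_pow_left₀ (by positivity)
          linarith [Real.add_one_le_exp (1/(d:ℝ))]
      _ = Real.exp 1 := by
          rw [← Real.exp_nat_mul]
          congr 1
          field_simp
  rw [h2, inv_pow, mul_inv, one_div, mul_comm ((d:ℝ)+1)⁻¹]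
  apply mul_le_mul_of_nonneg_right ?_ (by positivity)
  exact inv_anti₀ (by positivity) h3

lemma numeric (θ D : ℝ) (k d : ℕ) (hθ : 1 < θ) (hD : 1 ≤ D) (hk : 2*θ ≤ (k:ℝ))
    (hd : (d:ℝ) ≤ θ*D^2)
    (hyp : Real.exp 1 * θ^2 * D^2 * (k:ℝ) * Real.exp (-(D/(2*θ))) < 1) :
    Real.exp 1 * ((d:ℝ)+1) * (k:ℝ) * ((2*θ-1)/(2*θ-2)) ^ (θ*D) ≤ ((2*θ-1)/(θ-1)) ^ (D+1) := by
  set r : ℝ := (2*θ-1)/(θ-1) with hrdef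
  set ρ : ℝ := (2*θ-1)/(2*θ-2) with hρdef
  have hθ1 : (0:ℝ) < θ - 1 := by linarith
  have hθ0 : (0:ℝ) < θ := by linarith
  have hρ1 : 1 < ρ := by
    rw [hρdef, lt_div_iff₀ (by linarith)]
    linarith
  have hr2 : 2 < r := by
    rw [hrdef, lt_div_iff₀ hθ1]
    linarith
  have hρ0 : (0:ℝ) < ρ := by linarith
  have hr0 : (0:ℝ) < r := by linarith
  have hD0 : (0:ℝ) < D := by linarith
  have hcore := core θ hθ
  have step1 : ρ ^ (θ*D) ≤ Real.exp (-(D/(2*θ))) * r ^ D := by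
    rw [Real.rpow_def_of_pos hρ0, Real.rpow_def_of_pos hr0, ← Real.exp_add]
    apply Real.exp_le_exp.2
    have := mul_le_mul_of_nonneg_left hcore hD0.le
    calc Real.log ρ * (θ*D) = D * (θ * Real.log ρ) := by ring
      _ ≤ D * (Real.log r - 1/(2*θ)) := by
          apply mul_le_mul_of_nonneg_left (by linarith) hD0.le
      _ = -(D/(2*θ)) + Real.log r * D := by ring
  have hk0 : (0:ℝ) < k := by linarith
  have hE : (0:ℝ) < Real.exp (-(D/(2*θ))) := Real.exp_pos _
  have hrD : (0:ℝ) < r ^ D := Real.rpow_pos_of_pos hr0 D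
  have step2 : Real.exp 1 * ((d:ℝ)+1) * (k:ℝ) * ρ ^ (θ*D)
      ≤ (Real.exp 1 * θ^2 * D^2 * (k:ℝ) * Real.exp (-(D/(2*θ)))) * (((d:ℝ)+1)/(θ^2*D^2) * r ^ D) := by
    have h := mul_le_mul_of_nonneg_left step1 (by positivity : (0:ℝ) ≤ Real.exp 1 * ((d:ℝ)+1) * (k:ℝ))
    calc Real.exp 1 * ((d:ℝ)+1) * (k:ℝ) * ρ ^ (θ*D)
        ≤ Real.exp 1 * ((d:ℝ)+1) * (k:ℝ) * (Real.exp (-(D/(2*θ))) * r ^ D) := h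
      _ = (Real.exp 1 * θ^2 * D^2 * (k:ℝ) * Real.exp (-(D/(2*θ)))) * (((d:ℝ)+1)/(θ^2*D^2) * r ^ D) := by
          field_simp
  have step3 : ((d:ℝ)+1)/(θ^2*D^2) * r ^ D ≤ r ^ (D+1) := by
    have h1 : ((d:ℝ)+1)/(θ^2*D^2) ≤ 2/θ := by
      rw [div_le_div_iff₀ (by positivity) hθ0]
      have hθD : 1 ≤ θ * D^2 := by nlinarith
      nlinarith
    have h2 : (2:ℝ)/θ ≤ r := by
      calc (2:ℝ)/θ ≤ 2 := by
            rw [div_le_iff₀ hθ0]; nlinarith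
        _ ≤ r := hr2.le
    calc ((d:ℝ)+1)/(θ^2*D^2) * r ^ D ≤ r * r ^ D := by
          apply mul_le_mul_of_nonneg_right (le_trans h1 h2) hrD.le
      _ = r ^ (D+1) := by
          rw [Real.rpow_add hr0, Real.rpow_one]; ring
  have hfinal : (Real.exp 1 * θ^2 * D^2 * (k:ℝ) * Real.exp (-(D/(2*θ)))) * (((d:ℝ)+1)/(θ^2*D^2) * r ^ D)
      ≤ 1 * (((d:ℝ)+1)/(θ^2*D^2) * r ^ D) :=
    mul_le_mul_of_nonneg_right hyp.le (by positivity)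
  calc Real.exp 1 * ((d:ℝ)+1) * (k:ℝ) * ρ ^ (θ*D)
      ≤ (Real.exp 1 * θ^2 * D^2 * (k:ℝ) * Real.exp (-(D/(2*θ)))) * (((d:ℝ)+1)/(θ^2*D^2) * r ^ D) := step2
    _ ≤ 1 * (((d:ℝ)+1)/(θ^2*D^2) * r ^ D) := hfinal
    _ = ((d:ℝ)+1)/(θ^2*D^2) * r ^ D := one_mul _
    _ ≤ r ^ (D+1) := step3

lemma log_le_div_e {y : ℝ} (hy : 0 < y) : Real.log y ≤ y / Real.exp 1 := by
  have h := Real.log_le_sub_one_of_pos (show (0:ℝ) < y / Real.exp 1 by positivity)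
  rw [Real.log_div hy.ne' (Real.exp_pos 1).ne', Real.log_exp] at h
  linarith

variable {V : Type*} [Fintype V] [DecidableEq V]

noncomputable def combine (T : Finset V) (f g : V → Fin k) : V → Fin k :=
  fun v => if v ∈ T then f v else g v

lemma indep_count (T : Finset V) (A B : Finset (V → Fin k))
    (hA : ∀ f g, (∀ v ∈ T, f v = g v) → (f ∈ A ↔ g ∈ A))
    (hB : ∀ f g, (∀ v, v ∉ T → f v = g v) → (f ∈ B ↔ g ∈ B)) :
    (A ∩ B).card * k ^ (Fintype.card V) = A.card * B.card := by
  classical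
  have hcard : ((A ∩ B) ×ˢ (univ : Finset (V → Fin k))).card = (A ×ˢ B).card := by
    apply Finset.card_nbij' (fun p => (combine T p.1 p.2, combine T p.2 p.1))
      (fun p => (combine T p.1 p.2, combine T p.2 p.1))
    · rintro ⟨f, g⟩ hp
      rw [Finset.mem_coe, Finset.mem_product] at hp ⊢
      obtain ⟨hfAB, -⟩ := hp
      rw [Finset.mem_inter] at hfAB
      constructor
      · exact (hA _ _ (fun v hv => by simp [combine, hv])).2 hfAB.1
      · exact (hB _ _ (fun v hv => by simp [combine, hv])).2 hfAB.2
    · rintro ⟨f, g⟩ hp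
      rw [Finset.mem_coe, Finset.mem_product] at hp
      rw [Finset.mem_coe, Finset.mem_product, Finset.mem_inter]
      refine ⟨⟨?_, ?_⟩, Finset.mem_univ _⟩
      · exact (hA _ _ (fun v hv => by simp [combine, hv])).1 hp.1
      · exact (hB _ _ (fun v hv => by simp [combine, hv])).1 hp.2
    · rintro ⟨f, g⟩ -
      simp only [Prod.mk.injEq]
      constructor <;>
        · funext v
          by_cases hv : v ∈ T <;> simp [combine, hv]
    · rintro ⟨f, g⟩ -
      simp only [Prod.mk.injEq]
      constructor <;>
        · funext v
          by_cases hv : v ∈ T <;> simp [combine, hv]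
  rw [Finset.card_product, Finset.card_product, Finset.card_univ, Fintype.card_fun,
    Fintype.card_fin] at hcard
  exact hcard

lemma count_mgf (hk : 0 < k) (S : Finset V) (i : Fin k) (r : ℝ) (hr : 1 ≤ r) (a : ℕ) :
    ((univ.filter (fun c : V → Fin k =>
        a ≤ ((S.filter fun u => c u = i)).card)).card : ℝ) * r ^ a
      ≤ (r + ((k:ℝ) - 1)) ^ S.card * (k:ℝ) ^ (Fintype.card V - S.card) := by
  classical
  have hr0 : (0:ℝ) < r := by linarith
  -- the weight of a coloring
  set w : V → Fin k → ℝ := fun u j => if u ∈ S then (if j = i then r else 1) else 1 with hw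
  have hwpos : ∀ u j, 0 < w u j := by
    intro u j
    simp only [hw]
    split <;> [skip; norm_num]
    split <;> [exact hr0; norm_num]
  have hprod : ∀ c : V → Fin k, r ^ ((S.filter fun u => c u = i)).card = ∏ u, w u (c u) := by
    intro c
    rw [← Finset.prod_filter_mul_prod_filter_not (univ : Finset V) (· ∈ S)]
    have h2 : ∏ u ∈ univ.filter (· ∉ S), w u (c u) = 1 :=
      Finset.prod_eq_one (fun u hu => by
        simp only [Finset.mem_filter] at hu
        simp [hw, hu.2])
    have h1 : ∏ u ∈ univ.filter (· ∈ S), w u (c u) = r ^ ((S.filter fun u => c u = i)).card := by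
      rw [Finset.filter_univ_mem]
      rw [← Finset.prod_filter_mul_prod_filter_not S (fun u => c u = i)]
      have ha : ∏ u ∈ S.filter (fun u => c u = i), w u (c u) =
          r ^ ((S.filter fun u => c u = i)).card := by
        rw [Finset.prod_congr rfl (fun u hu => ?_), Finset.prod_const]
        simp only [Finset.mem_filter] at hu
        simp [hw, hu.1, hu.2]
      have hb : ∏ u ∈ S.filter (fun u => ¬ c u = i), w u (c u) = 1 := by
        apply Finset.prod_eq_one
        intro u hu
        simp only [Finset.mem_filter] at hu
        simp [hw, hu.1, hu.2]
      rw [ha, hb, mul_one]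
    rw [h1, h2, mul_one]
  have hsum : ∑ c : V → Fin k, ∏ u, w u (c u) =
      (r + ((k:ℝ) - 1)) ^ S.card * (k:ℝ) ^ (Fintype.card V - S.card) := by
    have hpi := Finset.prod_univ_sum (fun _ : V => (univ : Finset (Fin k))) w
    rw [Fintype.piFinset_univ] at hpi
    rw [← hpi]
    have hcol : ∀ u, ∑ j : Fin k, w u j = if u ∈ S then r + ((k:ℝ)-1) else (k:ℝ) := by
      intro u
      by_cases hu : u ∈ S
      · simp only [hw, hu, if_true]
        have hsplit : ∀ j : Fin k, (if j = i then r else 1) = (if j = i then r-1 else 0) + 1 := by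
          intro j; split <;> ring
        rw [Finset.sum_congr rfl (fun j _ => hsplit j), Finset.sum_add_distrib,
          Finset.sum_ite_eq' univ i (fun _ => r-1)]
        simp [Finset.card_univ]
        ring
      · simp [hw, hu, Finset.card_univ]
    rw [Finset.prod_congr rfl (fun u _ => hcol u)]
    rw [← Finset.prod_filter_mul_prod_filter_not (univ : Finset V) (· ∈ S)]
    have hfS : univ.filter (· ∈ S) = S := Finset.filter_univ_mem S
    have hfSc : univ.filter (· ∉ S) = Sᶜ := by ext u; simp
    rw [Finset.prod_congr hfS (fun u hu => if_pos hu),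
      Finset.prod_congr hfSc (fun u hu => if_neg (by simpa using hu)),
      Finset.prod_const, Finset.prod_const, Finset.card_compl]
  have hXle : ∀ c : V → Fin k, c ∈ univ.filter (fun c : V → Fin k =>
      a ≤ ((S.filter fun u => c u = i)).card) → r ^ a ≤ r ^ ((S.filter fun u => c u = i)).card := by
    intro c hc
    rw [Finset.mem_filter] at hc
    exact pow_le_pow_right₀ hr hc.2
  calc ((univ.filter (fun c : V → Fin k =>
        a ≤ ((S.filter fun u => c u = i)).card)).card : ℝ) * r ^ a
      = ∑ _c ∈ univ.filter (fun c : V → Fin k =>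
          a ≤ ((S.filter fun u => c u = i)).card), r ^ a := by
        rw [Finset.sum_const, nsmul_eq_mul]
    _ ≤ ∑ c ∈ univ.filter (fun c : V → Fin k =>
          a ≤ ((S.filter fun u => c u = i)).card), r ^ ((S.filter fun u => c u = i)).card :=
        Finset.sum_le_sum hXle
    _ ≤ ∑ c : V → Fin k, r ^ ((S.filter fun u => c u = i)).card :=
        Finset.sum_le_sum_of_subset_of_nonneg (Finset.filter_subset _ _)
          (fun c _ _ => by positivity)
    _ = ∑ c : V → Fin k, ∏ u, w u (c u) := Finset.sum_congr rfl (fun c _ => hprod c)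
    _ = (r + ((k:ℝ) - 1)) ^ S.card * (k:ℝ) ^ (Fintype.card V - S.card) := hsum

lemma lll (hk : 0 < k) {ι : Type*} [Fintype ι] [DecidableEq ι]
    (A : ι → Finset (V → Fin k)) (vbl : ι → Finset V)
    (hdet : ∀ i f g, (∀ v ∈ vbl i, f v = g v) → (f ∈ A i ↔ g ∈ A i))
    (x : ℝ) (hx0 : 0 < x) (hx1 : x < 1) (d : ℕ)
    (hnbr : ∀ i, (((univ : Finset ι).filter fun j => ¬ Disjoint (vbl i) (vbl j)).erase i).card ≤ d)
    (hp : ∀ i, ((A i).card : ℝ) ≤ x * (1-x)^d * (k:ℝ)^(Fintype.card V)) :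
    ∃ f : V → Fin k, ∀ i, f ∉ A i := by
  classical
  set C : Finset ι → Finset (V → Fin k) :=
    fun S => univ.filter (fun f => ∀ j ∈ S, f ∉ A j) with hC
  have hCinsert : ∀ (j : ι) (S : Finset ι), C (insert j S) = C S \ A j := by
    intro j S
    ext f
    simp only [hC, Finset.mem_filter, Finset.mem_univ, true_and, Finset.mem_sdiff,
      Finset.mem_insert]
    constructor
    · intro h
      exact ⟨fun l hl => h l (Or.inr hl), h j (Or.inl rfl)⟩
    · rintro ⟨h1, h2⟩ l (rfl | hl)
      · exact h2
      · exact h1 l hl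
  have hCcard : ∀ (j : ι) (S : Finset ι),
      ((C (insert j S)).card : ℝ) = (C S).card - ((A j ∩ C S).card : ℝ) := by
    intro j S
    rw [hCinsert j S, ← Finset.sdiff_inter_self_right (C S) (A j),
      Finset.cast_card_sdiff (Finset.inter_subset_right)]
  -- the main LLL induction
  have key : ∀ N : ℕ, ∀ S : Finset ι, S.card ≤ N → ∀ i, i ∉ S →
      ((A i ∩ C S).card : ℝ) ≤ x * (C S).card := by
    intro N
    induction N with
    | zero =>
      intro S hS i hi
      rw [Nat.le_zero, Finset.card_eq_zero] at hS
      subst hS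
      have hCe : C ∅ = univ := by
        ext f; simp [hC]
      rw [hCe, Finset.inter_univ, Finset.card_univ, Fintype.card_fun, Fintype.card_fin]
      calc ((A i).card : ℝ) ≤ x * (1-x)^d * (k:ℝ)^(Fintype.card V) := hp i
        _ ≤ x * 1 * (k:ℝ)^(Fintype.card V) := by
            apply mul_le_mul_of_nonneg_right ?_ (by positivity)
            apply mul_le_mul_of_nonneg_left ?_ hx0.le
            exact pow_le_one₀ (by linarith) (by linarith)
        _ = x * ((k:ℝ)^(Fintype.card V)) := by ring
        _ = x * (((k ^ Fintype.card V : ℕ) : ℝ)) := by push_cast; ring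
    | succ N ih =>
      intro S hS i hi
      by_cases hS' : S.card ≤ N
      · exact ih S hS' i hi
      -- split S into neighbours and non-neighbours of i
      set S1 : Finset ι := S.filter (fun j => ¬ Disjoint (vbl i) (vbl j)) with hS1
      set S2 : Finset ι := S \ S1 with hS2
      have hS1sub : S1 ⊆ S := Finset.filter_subset _ _
      have hS2sub : S2 ⊆ S := Finset.sdiff_subset
      have hunion : S2 ∪ S1 = S := Finset.sdiff_union_of_subset hS1sub
      have hS1card : S1.card ≤ d := by
        refine le_trans (Finset.card_le_card ?_) (hnbr i)
        intro j hj
        rw [Finset.mem_erase]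
        rw [hS1, Finset.mem_filter] at hj
        exact ⟨fun hji => hi (hji ▸ hj.1), Finset.mem_filter.2 ⟨Finset.mem_univ _, hj.2⟩⟩
      -- peel lemma
      have peel : ∀ T : Finset ι, T ⊆ S1 →
          (1-x)^T.card * ((C S2).card : ℝ) ≤ ((C (S2 ∪ T)).card : ℝ) := by
        intro T
        induction T using Finset.induction_on with
        | empty => intro _; simp
        | @insert j T hjT ihT =>
          intro hsub
          have hjS1 : j ∈ S1 := hsub (Finset.mem_insert_self j T)
          have hTsub : T ⊆ S1 := fun l hl => hsub (Finset.mem_insert_of_mem hl)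
          have hjS2T : j ∉ S2 ∪ T := by
            rw [Finset.mem_union]
            rintro (h | h)
            · rw [hS2, Finset.mem_sdiff] at h
              exact h.2 hjS1
            · exact hjT h
          have hcardle : (S2 ∪ T).card ≤ N := by
            have hsubS : S2 ∪ T ⊆ S.erase j := by
              intro l hl
              rw [Finset.mem_erase]
              refine ⟨fun hlj => hjS2T (hlj ▸ hl), ?_⟩
              rcases Finset.mem_union.1 hl with h | h
              · exact hS2sub h
              · exact hS1sub (hTsub h)
            calc (S2 ∪ T).card ≤ (S.erase j).card := Finset.card_le_card hsubS
              _ = S.card - 1 := Finset.card_erase_of_mem (hS1sub hjS1)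
              _ ≤ N := by omega
          have hkey := ih (S2 ∪ T) hcardle j hjS2T
          have hCassoc : C (S2 ∪ insert j T) = C (insert j (S2 ∪ T)) := by
            rw [Finset.union_insert]
          have : ((C (S2 ∪ insert j T)).card : ℝ)
              = ((C (S2 ∪ T)).card : ℝ) - ((A j ∩ C (S2 ∪ T)).card : ℝ) := by
            rw [hCassoc, hCcard]
          rw [this, Finset.card_insert_of_notMem hjT]
          have hT := ihT hTsub
          have h1x : (0:ℝ) ≤ 1 - x := by linarith
          calc (1-x)^(T.card+1) * ((C S2).card : ℝ)
              = (1-x) * ((1-x)^T.card * ((C S2).card : ℝ)) := by ring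
            _ ≤ (1-x) * ((C (S2 ∪ T)).card : ℝ) := by
                apply mul_le_mul_of_nonneg_left hT (by linarith)
            _ = ((C (S2 ∪ T)).card : ℝ) - x * ((C (S2 ∪ T)).card : ℝ) := by ring
            _ ≤ ((C (S2 ∪ T)).card : ℝ) - ((A j ∩ C (S2 ∪ T)).card : ℝ) := by linarith
      -- independence step
      have hCS2det : ∀ f g : V → Fin k, (∀ v, v ∉ vbl i → f v = g v) →
          (f ∈ C S2 ↔ g ∈ C S2) := by
        intro f g hfg
        simp only [hC, Finset.mem_filter, Finset.mem_univ, true_and]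
        have hiff : ∀ j ∈ S2, (f ∈ A j ↔ g ∈ A j) := by
          intro j hj
          have hdisj : Disjoint (vbl i) (vbl j) := by
            rw [hS2, Finset.mem_sdiff, hS1, Finset.mem_filter] at hj
            by_contra hnd
            exact hj.2 ⟨hj.1, hnd⟩
          apply hdet j
          intro v hv
          exact hfg v (Finset.disjoint_right.1 hdisj hv)
        constructor
        · intro h j hj hg
          exact h j hj ((hiff j hj).2 hg)
        · intro h j hj hg
          exact h j hj ((hiff j hj).1 hg)
      have hindep := indep_count (vbl i) (A i) (C S2) (hdet i) hCS2det
      -- assemble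
      have hK : (0:ℝ) < (k:ℝ)^(Fintype.card V) := by positivity
      have hsub1 : A i ∩ C S ⊆ A i ∩ C S2 := by
        apply Finset.inter_subset_inter_left
        intro f hf
        simp only [hC, Finset.mem_filter, Finset.mem_univ, true_and] at hf ⊢
        exact fun j hj => hf j (hS2sub hj)
      have h1 : ((A i ∩ C S).card : ℝ) ≤ ((A i ∩ C S2).card : ℝ) := by
        exact_mod_cast Finset.card_le_card hsub1
      have h2 : ((A i ∩ C S2).card : ℝ) * (k:ℝ)^(Fintype.card V)
          = ((A i).card : ℝ) * ((C S2).card : ℝ) := by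
        exact_mod_cast hindep
      have h3 : ((A i ∩ C S2).card : ℝ) ≤ x * (1-x)^d * ((C S2).card : ℝ) := by
        rw [← mul_le_mul_iff_of_pos_right hK, h2]
        calc ((A i).card : ℝ) * ((C S2).card : ℝ)
            ≤ (x * (1-x)^d * (k:ℝ)^(Fintype.card V)) * ((C S2).card : ℝ) := by
              apply mul_le_mul_of_nonneg_right (hp i) (by positivity)
          _ = x * (1-x)^d * ((C S2).card : ℝ) * (k:ℝ)^(Fintype.card V) := by ring
      have h4 : (1-x)^d * ((C S2).card : ℝ) ≤ ((C S).card : ℝ) := by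
        have hple := peel S1 le_rfl.subset
        rw [hunion] at hple
        calc (1-x)^d * ((C S2).card : ℝ) ≤ (1-x)^S1.card * ((C S2).card : ℝ) := by
              apply mul_le_mul_of_nonneg_right ?_ (by positivity)
              exact pow_le_pow_of_le_one (by linarith) (by linarith) hS1card
          _ ≤ ((C S).card : ℝ) := hple
      calc ((A i ∩ C S).card : ℝ) ≤ ((A i ∩ C S2).card : ℝ) := h1
        _ ≤ x * (1-x)^d * ((C S2).card : ℝ) := h3
        _ = x * ((1-x)^d * ((C S2).card : ℝ)) := by ring
        _ ≤ x * ((C S).card : ℝ) := mul_le_mul_of_nonneg_left h4 hx0.le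
  -- final peeling over all events
  have peelAll : ∀ T : Finset ι, (1-x)^T.card * ((k:ℝ)^(Fintype.card V)) ≤ ((C T).card : ℝ) := by
    intro T
    induction T using Finset.induction_on with
    | empty =>
      have hCe : C ∅ = univ := by ext f; simp [hC]
      rw [hCe, Finset.card_univ, Fintype.card_fun, Fintype.card_fin]
      simp
    | @insert j T hjT ihT =>
      have hkey := key T.card T le_rfl j hjT
      rw [Finset.card_insert_of_notMem hjT, hCcard j T]
      calc (1-x)^(T.card+1) * ((k:ℝ)^(Fintype.card V))
          = (1-x) * ((1-x)^T.card * ((k:ℝ)^(Fintype.card V))) := by ring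
        _ ≤ (1-x) * ((C T).card : ℝ) := by
            apply mul_le_mul_of_nonneg_left ihT (by linarith)
        _ = ((C T).card : ℝ) - x * ((C T).card : ℝ) := by ring
        _ ≤ ((C T).card : ℝ) - ((A j ∩ C T).card : ℝ) := by linarith
  have hfinal := peelAll univ
  have hpos : (0:ℝ) < ((C univ).card : ℝ) := by
    refine lt_of_lt_of_le ?_ hfinal
    have h1x : (0:ℝ) < 1 - x := by linarith
    positivity
  have hne : (C univ).Nonempty := Finset.card_pos.1 (by exact_mod_cast hpos)
  obtain ⟨f, hf⟩ := hne
  refine ⟨f, fun i => ?_⟩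
  simp only [hC, Finset.mem_filter] at hf
  exact hf.2 i (Finset.mem_univ i)

lemma part2_numeric (θ D : ℝ) (k : ℕ) (hθ : 1 < θ) (hk3 : 3 ≤ k) (hD1 : 1 ≤ D)
    (hc : 100 * θ * Real.log ((k:ℝ) * θ) ≤ D) :
    Real.exp 1 * θ ^ 2 * D ^ 2 * (k : ℝ) * Real.exp (-(D / (2 * θ))) < 1 := by
  have hθ0 : (0:ℝ) < θ := by linarith
  have hk0 : (0:ℝ) < (k:ℝ) := by positivity
  have hk3R : (3:ℝ) ≤ (k:ℝ) := by exact_mod_cast hk3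
  have hD0 : (0:ℝ) < D := by linarith
  set L := Real.log ((k:ℝ) * θ) with hL
  set aθ := Real.log θ with haθ
  set bk := Real.log (k:ℝ) with hbk
  set cD := Real.log D with hcD
  have hLsplit : L = bk + aθ := Real.log_mul (by positivity) (by positivity)
  have haθ0 : 0 ≤ aθ := Real.log_nonneg hθ.le
  have hbk1 : 1 < bk := by
    rw [hbk]
    have h3 : Real.exp 1 < 3 := by
      have := Real.exp_one_lt_d9
      linarith
    calc (1:ℝ) = Real.log (Real.exp 1) := (Real.log_exp 1).symm
      _ < Real.log 3 := Real.log_lt_log (Real.exp_pos 1) h3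
      _ ≤ Real.log (k:ℝ) := Real.log_le_log (by norm_num) hk3R
  have hL1 : 1 ≤ L := by rw [hLsplit]; linarith
  have haθL : aθ ≤ L := by rw [hLsplit]; linarith
  have hbkL : bk ≤ L := by rw [hLsplit]; linarith
  -- bound on log D
  have hlogD : cD ≤ 208/100 + aθ + D/(21*θ) := by
    have h8 : cD = Real.log (8*θ) + Real.log (D/(8*θ)) := by
      rw [hcD, ← Real.log_mul (by positivity) (by positivity)]
      congr 1
      field_simp
    have h9 : Real.log (D/(8*θ)) ≤ D/(8*θ)/Real.exp 1 := log_le_div_e (by positivity)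
    have h10 : D/(8*θ)/Real.exp 1 ≤ D/(21*θ) := by
      rw [div_div, div_le_div_iff₀ (by positivity) (by positivity)]
      have he : (2.7182818283:ℝ) < Real.exp 1 := Real.exp_one_gt_d9
      nlinarith [mul_nonneg (mul_nonneg hD0.le hθ0.le) (by linarith : (0:ℝ) ≤ 8*Real.exp 1 - 21)]
    have h11 : Real.log (8*θ) = Real.log 8 + aθ := Real.log_mul (by norm_num) (by positivity)
    have h12 : Real.log 8 ≤ 208/100 := by
      have h2 : Real.log 2 < 0.6931471808 := Real.log_two_lt_d9
      have : (8:ℝ) = 2^3 := by norm_num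
      rw [this, Real.log_pow]
      push_cast
      linarith
    linarith
  -- key linear inequality
  have hθa : θ * aθ ≤ θ * L := mul_le_mul_of_nonneg_left haθL hθ0.le
  have hθb : θ * bk ≤ θ * L := mul_le_mul_of_nonneg_left hbkL hθ0.le
  have hθ1L : θ ≤ θ * L := by nlinarith
  have hθc : 21*θ*cD ≤ 21*θ*(208/100 + aθ) + D := by
    have := mul_le_mul_of_nonneg_left hlogD (by positivity : (0:ℝ) ≤ 21*θ)
    have heq : 21*θ*(D/(21*θ)) = D := by field_simp
    nlinarith
  have h100 : 100*(θ*L) ≤ D := by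
    calc 100*(θ*L) = 100*θ*L := by ring
      _ ≤ D := hc
  have hkey : 1 + 2*aθ + 2*cD + bk < D/(2*θ) := by
    rw [lt_div_iff₀ (by positivity)]
    nlinarith [hθc, h100, hθa, hθb, hθ1L, hD0, hθ0]
  -- convert to exponential form
  have hexp : θ^2 * D^2 * (k:ℝ) = Real.exp (2*aθ + 2*cD + bk) := by
    rw [Real.exp_add, Real.exp_add]
    have e1 : Real.exp (2*aθ) = θ^2 := by
      rw [two_mul, Real.exp_add, haθ, Real.exp_log hθ0]; ring
    have e2 : Real.exp (2*cD) = D^2 := by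
      rw [two_mul, Real.exp_add, hcD, Real.exp_log hD0]; ring
    have e3 : Real.exp bk = (k:ℝ) := by rw [hbk, Real.exp_log hk0]
    rw [e1, e2, e3]
  calc Real.exp 1 * θ ^ 2 * D ^ 2 * (k : ℝ) * Real.exp (-(D / (2 * θ)))
      = Real.exp 1 * (θ^2 * D^2 * (k:ℝ)) * Real.exp (-(D/(2*θ))) := by ring
    _ = Real.exp (1 + (2*aθ + 2*cD + bk) + -(D/(2*θ))) := by
        rw [hexp, ← Real.exp_add, ← Real.exp_add]
    _ < Real.exp 0 := Real.exp_lt_exp.2 (by linarith)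
    _ = 1 := Real.exp_zero

end LLLAux

set_option maxHeartbeats 1600000 in
lemma main (θ : ℝ) (k n : ℕ) (G : SimpleGraph (Fin n)) (VL : Finset (Fin n))
    (hθ : 1 < θ) (hk : ⌈2 * θ⌉₊ ≤ k) (hbip : Bipartite G VL) (hΔ : 1 ≤ maxDegOn G VL)
    (hR : (maxDegOn G VLᶜ : ℝ) ≤ θ * (maxDegOn G VL : ℝ))
    (hyp : Real.exp 1 * θ ^ 2 * (maxDegOn G VL : ℝ) ^ 2 * (k : ℝ) *
        Real.exp (-((maxDegOn G VL : ℝ) / (2 * θ))) < 1) :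
    ∃ U : Fin k → Finset (Fin n),
      (∀ i j, i ≠ j → Disjoint (U i) (U j)) ∧
      (∀ v : Fin n, v ∈ VL ↔ ∃ i, v ∈ U i) ∧
      ∀ v ∈ VLᶜ, ∀ i : Fin k, degIn G (U i) v ≤ maxDegOn G VL := by
  classical
  set Δ : ℕ := maxDegOn G VL with hΔdef
  set D : ℝ := (Δ : ℝ) with hDdef
  have hD1 : (1:ℝ) ≤ D := by rw [hDdef]; exact_mod_cast hΔ
  have hθ0 : (0:ℝ) < θ := by linarith
  have hk3 : 3 ≤ k := by
    have h2 : 2 < ⌈2*θ⌉₊ := Nat.lt_ceil.2 (by push_cast; linarith)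
    omega
  have hk0 : 0 < k := by omega
  have hkθ : 2*θ ≤ (k:ℝ) := le_trans (Nat.le_ceil _) (by exact_mod_cast hk)
  set d : ℕ := ⌊θ*D⌋₊ * Δ with hddef
  have hfl1 : 1 ≤ ⌊θ*D⌋₊ := Nat.le_floor (by push_cast; nlinarith)
  have hd1 : 1 ≤ d := Nat.one_le_iff_ne_zero.2 (by positivity)
  have hdle : (d:ℝ) ≤ θ*D^2 := by
    have h1 : ((⌊θ*D⌋₊ : ℕ):ℝ) ≤ θ*D := Nat.floor_le (by positivity)
    rw [hddef]
    push_cast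
    calc ((⌊θ*D⌋₊ : ℕ):ℝ) * D ≤ (θ*D) * D := by
          apply mul_le_mul_of_nonneg_right h1 (by linarith)
      _ = θ*D^2 := by ring
  set x : ℝ := 1/((d:ℝ)+1) with hxdef
  have hx0 : 0 < x := by positivity
  have hx1 : x < 1 := by
    rw [hxdef, div_lt_one (by positivity)]
    have : (1:ℝ) ≤ (d:ℝ) := by exact_mod_cast hd1
    linarith
  set r : ℝ := (2*θ-1)/(θ-1) with hrdef
  set ρ : ℝ := (2*θ-1)/(2*θ-2) with hρdef
  have hθ1 : (0:ℝ) < θ - 1 := by linarith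
  have hρ1 : 1 < ρ := by rw [hρdef, lt_div_iff₀ (by linarith)]; linarith
  have hr2 : 2 < r := by rw [hrdef, lt_div_iff₀ hθ1]; linarith
  have hr1 : 1 ≤ r := by linarith
  have hr0 : (0:ℝ) < r := by linarith
  -- events and variable sets
  set Γ : Fin n → Finset (Fin n) := fun v => univ.filter (fun u => G.Adj v u) with hΓdef
  set vbl : Fin n → Finset (Fin n) := fun v => if v ∈ VL then ∅ else Γ v with hvbl
  set A : Fin n → Finset (Fin n → Fin k) := fun v =>
    if v ∈ VL then ∅
    else univ.filter (fun c : Fin n → Fin k => ∃ i : Fin k,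
      Δ < ((Γ v).filter (fun u => c u = i)).card) with hA
  -- degree facts
  have hdeg_eq : ∀ v, degIn G univ v = (Γ v).card := fun v => rfl
  have hdegL : ∀ u ∈ VL, (Γ u).card ≤ Δ := by
    intro u hu
    exact le_trans (le_of_eq (hdeg_eq u).symm) (Finset.le_sup hu)
  have hdegR : ∀ v, v ∉ VL → ((Γ v).card : ℝ) ≤ θ*D := by
    intro v hv
    have h1 : degIn G univ v ≤ maxDegOn G VLᶜ :=
      Finset.le_sup (Finset.mem_compl.2 hv)
    have := (hdeg_eq v) ▸ h1
    calc ((Γ v).card : ℝ) ≤ (maxDegOn G VLᶜ : ℝ) := by exact_mod_cast this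
      _ ≤ θ*D := hR
  have hΓVL : ∀ v, v ∉ VL → ∀ u ∈ Γ v, u ∈ VL := by
    intro v hv u hu
    rw [hΓdef] at hu
    simp only [Finset.mem_filter, Finset.mem_univ, true_and] at hu
    exact (hbip u v hu.symm).2 hv
  -- determinism
  have hdet : ∀ v (f g : Fin n → Fin k), (∀ u ∈ vbl v, f u = g u) → (f ∈ A v ↔ g ∈ A v) := by
    intro v f g hfg
    by_cases hv : v ∈ VL
    · simp [hA, hv]
    · simp only [hA, hv, if_false, Finset.mem_filter, Finset.mem_univ, true_and]
      have : ∀ i : Fin k, (Γ v).filter (fun u => f u = i) = (Γ v).filter (fun u => g u = i) := by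
        intro i
        apply Finset.filter_congr
        intro u hu
        rw [hfg u (by simp [hvbl, hv, hu])]
      exact ⟨fun ⟨i, hi⟩ => ⟨i, (this i) ▸ hi⟩, fun ⟨i, hi⟩ => ⟨i, (this i).symm ▸ hi⟩⟩
  -- neighbour bound
  have hnbr : ∀ v : Fin n,
      (((univ : Finset (Fin n)).filter fun w => ¬ Disjoint (vbl v) (vbl w)).erase v).card ≤ d := by
    intro v
    by_cases hv : v ∈ VL
    · have : ((univ : Finset (Fin n)).filter fun w => ¬ Disjoint (vbl v) (vbl w)) = ∅ := by
        apply Finset.filter_false_of_mem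
        intro w _
        simp [hvbl, hv]
      rw [this]
      simp
    · have hsub : ((univ : Finset (Fin n)).filter fun w => ¬ Disjoint (vbl v) (vbl w))
          ⊆ (Γ v).biUnion (fun u => Γ u) := by
        intro w hw
        simp only [Finset.mem_filter, Finset.mem_univ, true_and] at hw
        obtain ⟨u, hu1, hu2⟩ := Finset.not_disjoint_iff.1 hw
        rw [hvbl] at hu1 hu2
        simp only [hv, if_false] at hu1
        have huΓw : u ∈ Γ w := by
          by_cases hwVL : w ∈ VL
          · simp [hwVL] at hu2
          · simpa [hwVL] using hu2
        rw [Finset.mem_biUnion]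
        refine ⟨u, hu1, ?_⟩
        rw [hΓdef]
        simp only [Finset.mem_filter, Finset.mem_univ, true_and]
        rw [hΓdef] at huΓw
        simp only [Finset.mem_filter, Finset.mem_univ, true_and] at huΓw
        exact huΓw.symm
      calc (((univ : Finset (Fin n)).filter fun w => ¬ Disjoint (vbl v) (vbl w)).erase v).card
          ≤ ((univ : Finset (Fin n)).filter fun w => ¬ Disjoint (vbl v) (vbl w)).card :=
            Finset.card_le_card (Finset.erase_subset _ _)
        _ ≤ ((Γ v).biUnion (fun u => Γ u)).card := Finset.card_le_card hsub
        _ ≤ ∑ u ∈ Γ v, (Γ u).card := Finset.card_biUnion_le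
        _ ≤ ∑ _u ∈ Γ v, Δ := Finset.sum_le_sum (fun u hu => hdegL u (hΓVL v hv u hu))
        _ = (Γ v).card * Δ := by rw [Finset.sum_const, smul_eq_mul]
        _ ≤ ⌊θ*D⌋₊ * Δ := by
            apply Nat.mul_le_mul_right
            exact Nat.le_floor (by push_cast; exact hdegR v hv)
  -- probability bound
  have hnum := numeric θ D k d hθ hD1 hkθ hdle hyp
  have hp : ∀ v : Fin n, ((A v).card : ℝ) ≤ x * (1-x)^d * (k:ℝ)^(Fintype.card (Fin n)) := by
    intro v
    have hrhs0 : (0:ℝ) ≤ x * (1-x)^d * (k:ℝ)^(Fintype.card (Fin n)) := by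
      have : (0:ℝ) ≤ 1 - x := by linarith
      positivity
    by_cases hv : v ∈ VL
    · simp only [hA, hv, if_true]
      simpa using hrhs0
    · -- union bound over colours
      have hsub : A v ⊆ (univ : Finset (Fin k)).biUnion (fun i =>
          univ.filter (fun c : Fin n → Fin k =>
            Δ + 1 ≤ (((Γ v)).filter (fun u => c u = i)).card)) := by
        intro c hc
        simp only [hA, hv, if_false, Finset.mem_filter, Finset.mem_univ, true_and] at hc
        obtain ⟨i, hi⟩ := hc
        rw [Finset.mem_biUnion]
        exact ⟨i, Finset.mem_univ _, by simp only [Finset.mem_filter, Finset.mem_univ, true_and]; omega⟩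
      have htail : ∀ i : Fin k, ((univ.filter (fun c : Fin n → Fin k =>
          Δ + 1 ≤ (((Γ v)).filter (fun u => c u = i)).card)).card : ℝ)
            ≤ (k:ℝ)^(Fintype.card (Fin n)) * ρ^(θ*D) / r^(Δ+1) := by
        intro i
        have hmgf := count_mgf hk0 (Γ v) i r hr1 (Δ+1)
        have hrp : (0:ℝ) < r^(Δ+1) := by positivity
        rw [← le_div_iff₀ hrp] at hmgf
        refine le_trans hmgf (div_le_div_of_nonneg_right ?_ hrp.le)
        -- (r + (k-1))^m * k^(N-m) ≤ k^N * ρ^(θD)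
        have hm : (Γ v).card ≤ Fintype.card (Fin n) := Finset.card_le_univ _
        have hk0R : (0:ℝ) < (k:ℝ) := by exact_mod_cast hk0
        have h2θ2 : (0:ℝ) < 2*θ-2 := by linarith
        have hρval : ρ*(2*θ-2) = 2*θ-1 := by rw [hρdef]; field_simp
        have hrval : r*(θ-1) = 2*θ-1 := by rw [hrdef]; field_simp
        have hbase : r + ((k:ℝ)-1) ≤ ρ*(k:ℝ) := by
          nlinarith [mul_nonneg (by linarith : (0:ℝ) ≤ (k:ℝ) - 2*θ) (by nlinarith : (0:ℝ) ≤ ρ - 1)]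
        have hbase0 : (0:ℝ) ≤ r + ((k:ℝ)-1) := by
          have : (1:ℝ) ≤ (k:ℝ) := by exact_mod_cast hk0
          linarith
        have hρm : ρ^((Γ v).card) ≤ ρ^(θ*D) := by
          rw [← Real.rpow_natCast ρ ((Γ v).card)]
          exact Real.rpow_le_rpow_of_exponent_le hρ1.le (hdegR v hv)
        calc (r + ((k:ℝ)-1))^((Γ v).card) * (k:ℝ)^(Fintype.card (Fin n) - (Γ v).card)
            ≤ (ρ*(k:ℝ))^((Γ v).card) * (k:ℝ)^(Fintype.card (Fin n) - (Γ v).card) := by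
              apply mul_le_mul_of_nonneg_right
                (pow_le_pow_left₀ hbase0 hbase _) (by positivity)
          _ = ρ^((Γ v).card) * ((k:ℝ)^(Fintype.card (Fin n) - (Γ v).card) * (k:ℝ)^((Γ v).card)) := by
              rw [mul_pow]; ring
          _ = ρ^((Γ v).card) * (k:ℝ)^(Fintype.card (Fin n)) := by
              rw [pow_sub_mul_pow (k:ℝ) hm]
          _ ≤ ρ^(θ*D) * (k:ℝ)^(Fintype.card (Fin n)) := by
              apply mul_le_mul_of_nonneg_right hρm (by positivity)
          _ = (k:ℝ)^(Fintype.card (Fin n)) * ρ^(θ*D) := by ring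
      -- combine union bound
      have hcard : ((A v).card : ℝ) ≤
          (k:ℝ) * ((k:ℝ)^(Fintype.card (Fin n)) * ρ^(θ*D) / r^(Δ+1)) := by
        calc ((A v).card : ℝ)
            ≤ (((univ : Finset (Fin k)).biUnion (fun i =>
                univ.filter (fun c : Fin n → Fin k =>
                  Δ + 1 ≤ (((Γ v)).filter (fun u => c u = i)).card))).card : ℝ) := by
              exact_mod_cast Finset.card_le_card hsub
          _ ≤ ((∑ i : Fin k, (univ.filter (fun c : Fin n → Fin k =>
                Δ + 1 ≤ (((Γ v)).filter (fun u => c u = i)).card)).card : ℕ) : ℝ) := by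
              exact_mod_cast Finset.card_biUnion_le
          _ = ∑ i : Fin k, ((univ.filter (fun c : Fin n → Fin k =>
                Δ + 1 ≤ (((Γ v)).filter (fun u => c u = i)).card)).card : ℝ) := by
              push_cast; rfl
          _ ≤ ∑ _i : Fin k, (k:ℝ)^(Fintype.card (Fin n)) * ρ^(θ*D) / r^(Δ+1) :=
              Finset.sum_le_sum (fun i _ => htail i)
          _ = (k:ℝ) * ((k:ℝ)^(Fintype.card (Fin n)) * ρ^(θ*D) / r^(Δ+1)) := by
              rw [Finset.sum_const, Finset.card_univ, Fintype.card_fin, nsmul_eq_mul]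
      refine le_trans hcard ?_
      -- use the numeric bound
      have hrΔ : r^(D+1) = r^(Δ+1) := by
        rw [← Real.rpow_natCast r (Δ+1)]
        congr 1
        rw [hDdef]
        push_cast
        ring
      have hEd : (0:ℝ) < Real.exp 1 * ((d:ℝ)+1) := by positivity
      have hstep : (k:ℝ) * ρ^(θ*D) / r^(Δ+1) ≤ (Real.exp 1 * ((d:ℝ)+1))⁻¹ := by
        rw [div_le_iff₀ (by positivity), ← hrΔ]
        calc (k:ℝ) * ρ^(θ*D) = (Real.exp 1 * ((d:ℝ)+1))⁻¹ * (Real.exp 1 * ((d:ℝ)+1) * (k:ℝ) * ρ^(θ*D)) := by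
              field_simp
          _ ≤ (Real.exp 1 * ((d:ℝ)+1))⁻¹ * r^(D+1) := by
              apply mul_le_mul_of_nonneg_left ?_ (by positivity)
              exact hnum
      have hxd := xd d hd1
      calc (k:ℝ) * ((k:ℝ)^(Fintype.card (Fin n)) * ρ^(θ*D) / r^(Δ+1))
          = ((k:ℝ) * ρ^(θ*D) / r^(Δ+1)) * (k:ℝ)^(Fintype.card (Fin n)) := by ring
        _ ≤ (Real.exp 1 * ((d:ℝ)+1))⁻¹ * (k:ℝ)^(Fintype.card (Fin n)) := by
            apply mul_le_mul_of_nonneg_right hstep (by positivity)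
        _ ≤ (1/((d:ℝ)+1)) * (1 - 1/((d:ℝ)+1))^d * (k:ℝ)^(Fintype.card (Fin n)) := by
            apply mul_le_mul_of_nonneg_right hxd (by positivity)
        _ = x * (1-x)^d * (k:ℝ)^(Fintype.card (Fin n)) := by rw [hxdef]
  -- apply the local lemma
  obtain ⟨c, hc⟩ := lll hk0 A vbl hdet x hx0 hx1 d hnbr hp
  refine ⟨fun i => VL.filter (fun u => c u = i), ?_, ?_, ?_⟩
  · intro i j hij
    rw [Finset.disjoint_left]
    intro u hu1 hu2
    rw [Finset.mem_filter] at hu1 hu2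
    exact hij (hu1.2 ▸ hu2.2)
  · intro v
    constructor
    · intro hv
      exact ⟨c v, Finset.mem_filter.2 ⟨hv, rfl⟩⟩
    · rintro ⟨i, hi⟩
      exact (Finset.mem_filter.1 hi).1
  · intro v hv i
    have hvnot : v ∉ VL := Finset.mem_compl.1 hv
    have hcA := hc v
    simp only [hA, hvnot, if_false, Finset.mem_filter, Finset.mem_univ, true_and,
      not_exists, not_lt] at hcA
    have hsub2 : (VL.filter (fun u => c u = i)).filter (fun w => G.Adj v w)
        ⊆ (Γ v).filter (fun u => c u = i) := by
      intro u hu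
      simp only [Finset.mem_filter] at hu ⊢
      refine ⟨?_, hu.1.2⟩
      rw [hΓdef]
      simp only [Finset.mem_filter, Finset.mem_univ, true_and]
      exact hu.2
    calc degIn G (VL.filter (fun u => c u = i)) v
        = ((VL.filter (fun u => c u = i)).filter (fun w => G.Adj v w)).card := rfl
      _ ≤ ((Γ v).filter (fun u => c u = i)).card := Finset.card_le_card hsub2
      _ ≤ Δ := hcA i

/-- Proposition 8.3: partitioning the left part of a
bipartite graph.  Let `θ > 1` and `k ≥ ⌈2θ⌉`.  If
`e·θ²·Δ_L²·k·exp(−Δ_L/(2θ)) < 1` then `V_L` can be partitioned into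
`U_1 ⊎ ⋯ ⊎ U_k` with `|Γ(v) ∩ U_i| ≤ Δ_L` for all `v ∈ V_R` and `i ∈ [k]`;
in particular, there is an absolute constant `c` such that this holds whenever
`Δ_L ≥ c·θ·log(kθ)`. -/
theorem statement14 :
    (∀ (θ : ℝ) (k n : ℕ) (G : SimpleGraph (Fin n)) (VL : Finset (Fin n)),
      1 < θ → ⌈2 * θ⌉₊ ≤ k → Bipartite G VL → 1 ≤ maxDegOn G VL →
      (maxDegOn G VLᶜ : ℝ) ≤ θ * (maxDegOn G VL : ℝ) →
      Real.exp 1 * θ ^ 2 * (maxDegOn G VL : ℝ) ^ 2 * (k : ℝ) *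
          Real.exp (-((maxDegOn G VL : ℝ) / (2 * θ))) < 1 →
      ∃ U : Fin k → Finset (Fin n),
        (∀ i j, i ≠ j → Disjoint (U i) (U j)) ∧
        (∀ v : Fin n, v ∈ VL ↔ ∃ i, v ∈ U i) ∧
        ∀ v ∈ VLᶜ, ∀ i : Fin k, degIn G (U i) v ≤ maxDegOn G VL)
    ∧
    ∃ c : ℝ, 0 < c ∧
      ∀ (θ : ℝ) (k n : ℕ) (G : SimpleGraph (Fin n)) (VL : Finset (Fin n)),
        1 < θ → ⌈2 * θ⌉₊ ≤ k → Bipartite G VL → 1 ≤ maxDegOn G VL →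
        (maxDegOn G VLᶜ : ℝ) ≤ θ * (maxDegOn G VL : ℝ) →
        c * θ * Real.log ((k : ℝ) * θ) ≤ (maxDegOn G VL : ℝ) →
        ∃ U : Fin k → Finset (Fin n),
          (∀ i j, i ≠ j → Disjoint (U i) (U j)) ∧
          (∀ v : Fin n, v ∈ VL ↔ ∃ i, v ∈ U i) ∧
          ∀ v ∈ VLᶜ, ∀ i : Fin k, degIn G (U i) v ≤ maxDegOn G VL := by
  constructor
  · intro θ k n G VL hθ hk hbip hΔ hR hyp
    exact main θ k n G VL hθ hk hbip hΔ hR hyp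
  · refine ⟨100, by norm_num, ?_⟩
    intro θ k n G VL hθ hk hbip hΔ hR hc
    have hk3 : 3 ≤ k := by
      have h2 : 2 < ⌈2*θ⌉₊ := Nat.lt_ceil.2 (by push_cast; linarith)
      omega
    have hD1 : (1:ℝ) ≤ (maxDegOn G VL : ℝ) := by exact_mod_cast hΔ
    exact main θ k n G VL hθ hk hbip hΔ hR
      (part2_numeric θ (maxDegOn G VL : ℝ) k hθ hk3 hD1 hc)

end Paper
end
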